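/- arXiv:1802.07298 — 2 statements merged into one kernel-verified Lean document; each statement's English description precedes it below -/
import Mathlib

section
/- The nonnegative orthant is forward closed for a mass-action system satisfying the Hárs–Tóth condition: if f : ℝˢ → ℝˢ is a polynomial vector field such that every monomial of fᵢ with negative coefficient is divisible by xᵢ, and x : [0,T] → ℝˢ is a solution of ẋ = f(x) with x(0) in the open positive orthant, then x(t) ≥ 0 componentwise for all t ∈ [0,T]. -/
open MvPolynomial Set

/-- Decomposition given by the Hárs–Tóth condition: `F = X i * q + p` with `p` having
only nonnegative coefficients. -/
lemma hars_toth_decomp {s : ℕ} (F : MvPolynomial (Fin s) ℝ) (i : Fin s)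
    (hHT : ∀ m ∈ F.support, F.coeff m < 0 → m i ≠ 0) :
    ∃ q p : MvPolynomial (Fin s) ℝ, F = X i * q + p ∧ ∀ m, 0 ≤ p.coeff m := by
  classical
  set N := F.support.filter (fun m => F.coeff m < 0) with hN
  refine ⟨∑ m ∈ N, monomial (m - Finsupp.single i 1) (F.coeff m),
    F - ∑ m ∈ N, monomial m (F.coeff m), ?_, ?_⟩
  · have key : (X i : MvPolynomial (Fin s) ℝ) *
        ∑ m ∈ N, monomial (m - Finsupp.single i 1) (F.coeff m)
        = ∑ m ∈ N, monomial m (F.coeff m) := by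
      rw [Finset.mul_sum]
      refine Finset.sum_congr rfl fun m hm => ?_
      have hmN := Finset.mem_filter.mp hm
      have hmi : m i ≠ 0 := hHT m hmN.1 hmN.2
      have hle : Finsupp.single i 1 ≤ m := by
        rw [Finsupp.single_le_iff]
        exact Nat.one_le_iff_ne_zero.mpr hmi
      rw [X, monomial_mul, one_mul, add_tsub_cancel_of_le hle]
    rw [key]
    ring
  · intro m
    rw [coeff_sub]
    have hsum : (∑ m' ∈ N, monomial m' (F.coeff m')).coeff m
        = if m ∈ N then F.coeff m else 0 := by
      simp [MvPolynomial.coeff_sum, coeff_monomial, Finset.sum_ite_eq']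
    rw [hsum]
    by_cases hmN : m ∈ N
    · simp [hmN]
    · simp only [hmN, if_false, sub_zero]
      by_cases hms : m ∈ F.support
      · have : ¬ F.coeff m < 0 := fun h => hmN (Finset.mem_filter.mpr ⟨hms, h⟩)
        linarith
      · rw [MvPolynomial.notMem_support_iff.mp hms]

/-- Evaluating a polynomial with nonnegative coefficients at a nonnegative point is
nonnegative. -/
lemma eval_nonneg_of_coeff_nonneg {s : ℕ} (p : MvPolynomial (Fin s) ℝ)
    (hp : ∀ m, 0 ≤ p.coeff m) (y : Fin s → ℝ) (hy : ∀ i, 0 ≤ y i) :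
    0 ≤ eval y p := by
  rw [eval_eq]
  exact Finset.sum_nonneg fun m _ =>
    mul_nonneg (hp m) (Finset.prod_nonneg fun i _ => pow_nonneg (hy i) _)

/-- The nonnegative orthant is forward closed for a polynomial vector field satisfying
the Hárs–Tóth condition. -/
theorem nonneg_orthant_forward_closed_hars_toth
    {s : ℕ} (f : Fin s → MvPolynomial (Fin s) ℝ)
    (hHT : ∀ i : Fin s, ∀ m ∈ (f i).support, (f i).coeff m < 0 → m i ≠ 0)
    (T : ℝ) (hT : 0 ≤ T) (x : ℝ → Fin s → ℝ)
    (hode : ∀ t ∈ Set.Icc (0:ℝ) T,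
      HasDerivAt x (fun i => MvPolynomial.eval (x t) (f i)) t)
    (hx0 : ∀ i, 0 < x 0 i) :
    ∀ t ∈ Set.Icc (0:ℝ) T, ∀ i, 0 ≤ x t i := by
  classical
  choose q p hfd hpc using fun i => hars_toth_decomp (f i) i (hHT i)
  -- coordinate derivatives
  have hode' : ∀ i, ∀ t ∈ Set.Icc (0:ℝ) T,
      HasDerivAt (fun t => x t i) (MvPolynomial.eval (x t) (f i)) t := by
    intro i t ht
    exact hasDerivAt_pi.mp (hode t ht) i
  -- continuity of each coordinate on Icc
  have hx_cont : ∀ i, ∀ t ∈ Set.Icc (0:ℝ) T, ContinuousAt (fun t => x t i) t :=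
    fun i t ht => (hode' i t ht).continuousAt
  have hx_contF : ∀ t ∈ Set.Icc (0:ℝ) T, ContinuousAt x t :=
    fun t ht => (hode t ht).continuousAt
  -- bound on eval of q i along the solution
  have hbound : ∀ i, ∃ M : ℝ, ∀ t ∈ Set.Icc (0:ℝ) T, |eval (x t) (q i)| ≤ M := by
    intro i
    have hc : ContinuousOn (fun t => eval (x t) (q i)) (Set.Icc 0 T) := by
      intro t ht
      exact (((q i).continuous_eval).continuousAt.comp (hx_contF t ht)).continuousWithinAt
    obtain ⟨M, hM⟩ := isCompact_Icc.exists_bound_of_continuousOn hc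
    exact ⟨M, fun t ht => by simpa [Real.norm_eq_abs] using hM t ht⟩
  choose M hM using hbound
  -- Key fact: if x is nonnegative on [0, b] then x b is strictly positive
  have key : ∀ b ∈ Set.Icc (0:ℝ) T, (∀ τ ∈ Set.Icc (0:ℝ) b, ∀ j, 0 ≤ x τ j) →
      ∀ i, 0 < x b i := by
    intro b hb hnn i
    set z : ℝ → ℝ := fun t => x t i * Real.exp (M i * t) with hz
    have hIcc : Set.Icc (0:ℝ) b ⊆ Set.Icc (0:ℝ) T :=
      Set.Icc_subset_Icc le_rfl hb.2
    have hderiv : ∀ t ∈ Set.Icc (0:ℝ) T, HasDerivAt z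
        (MvPolynomial.eval (x t) (f i) * Real.exp (M i * t)
          + x t i * (Real.exp (M i * t) * M i)) t := by
      intro t ht
      have h1 : HasDerivAt (fun t : ℝ => Real.exp (M i * t))
          (Real.exp (M i * t) * M i) t := by
        have := ((hasDerivAt_id t).const_mul (M i)).exp
        simpa [mul_one] using this
      exact (hode' i t ht).mul h1
    have hmono : MonotoneOn z (Set.Icc 0 b) := by
      apply monotoneOn_of_deriv_nonneg (convex_Icc 0 b)
      · intro t ht
        exact (hderiv t (hIcc ht)).continuousAt.continuousWithinAt
      · intro t ht
        rw [interior_Icc] at ht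
        exact ((hderiv t (hIcc (Set.Ioo_subset_Icc_self ht))).differentiableAt).differentiableWithinAt
      · intro t ht
        rw [interior_Icc] at ht
        have htI : t ∈ Set.Icc (0:ℝ) b := Set.Ioo_subset_Icc_self ht
        rw [(hderiv t (hIcc htI)).deriv]
        have hev : MvPolynomial.eval (x t) (f i)
            = x t i * eval (x t) (q i) + eval (x t) (p i) := by
          conv_lhs => rw [hfd i]
          simp [eval_mul, eval_add]
        rw [hev]
        have hE : (0:ℝ) < Real.exp (M i * t) := Real.exp_pos _
        have hxi : 0 ≤ x t i := hnn t htI i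
        have hg : -(M i) ≤ eval (x t) (q i) := neg_le_of_abs_le (hM i t (hIcc htI))
        have hp0 : 0 ≤ eval (x t) (p i) :=
          eval_nonneg_of_coeff_nonneg (p i) (hpc i) (x t) (hnn t htI)
        nlinarith [mul_nonneg hxi (by linarith : (0:ℝ) ≤ eval (x t) (q i) + M i),
          mul_pos hE (mul_pos hE hE)]
    have h0b : (0:ℝ) ∈ Set.Icc (0:ℝ) b := ⟨le_rfl, hb.1⟩
    have hbb : b ∈ Set.Icc (0:ℝ) b := ⟨hb.1, le_rfl⟩
    have := hmono h0b hbb hb.1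
    have hz0 : z 0 = x 0 i := by simp [hz]
    have hzb : 0 < z b := by rw [← hz0] at *; exact lt_of_lt_of_le (by simpa [hz] using hx0 i) this
    have hE : (0:ℝ) < Real.exp (M i * b) := Real.exp_pos _
    by_contra hle
    push_neg at hle
    have : z b ≤ 0 := mul_nonpos_of_nonpos_of_nonneg hle hE.le
    linarith
  -- the set of times up to which x stays nonnegative
  set C : Set ℝ := {t | t ∈ Set.Icc (0:ℝ) T ∧ ∀ τ ∈ Set.Icc (0:ℝ) t, ∀ j, 0 ≤ x τ j}
    with hC
  have h0C : (0:ℝ) ∈ C := by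
    refine ⟨⟨le_rfl, hT⟩, fun τ hτ j => ?_⟩
    have : τ = 0 := le_antisymm hτ.2 hτ.1
    rw [this]; exact (hx0 j).le
  have hCne : C.Nonempty := ⟨0, h0C⟩
  have hCbdd : BddAbove C := ⟨T, fun t ht => ht.1.2⟩
  set t₀ := sSup C with ht₀
  have ht₀0 : 0 ≤ t₀ := le_csSup hCbdd h0C
  have ht₀T : t₀ ≤ T := csSup_le hCne fun t ht => ht.1.2
  have ht₀mem : t₀ ∈ C := by
    refine ⟨⟨ht₀0, ht₀T⟩, fun τ hτ j => ?_⟩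
    rcases lt_or_eq_of_le hτ.2 with hlt | heq
    · obtain ⟨c, hcC, hc⟩ := exists_lt_of_lt_csSup hCne hlt
      exact hcC.2 τ ⟨hτ.1, hc.le⟩ j
    · subst heq
      rcases eq_or_lt_of_le hτ.1 with h0 | h0
      · rw [← h0]; exact (hx0 j).le
      have hcont : ContinuousWithinAt (fun t => x t j) (Set.Ioo 0 t₀) t₀ :=
        (hx_cont j t₀ ⟨hτ.1, le_trans hτ.2 ht₀T⟩).continuousWithinAt
      have hne : (Filter.NeBot (nhdsWithin t₀ (Set.Ioo 0 t₀))) := by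
        rw [← mem_closure_iff_nhdsWithin_neBot, closure_Ioo (ne_of_lt h0)]
        exact ⟨h0.le, le_rfl⟩
      refine ge_of_tendsto hcont ?_
      filter_upwards [self_mem_nhdsWithin] with τ' hτ'
      obtain ⟨c, hcC, hc⟩ := exists_lt_of_lt_csSup hCne (hτ'.2)
      exact hcC.2 τ' ⟨hτ'.1.le, hc.le⟩ j
  -- t₀ = T
  have ht₀eq : t₀ = T := by
    by_contra hne
    have ht₀lt : t₀ < T := lt_of_le_of_ne ht₀T hne
    have hpos : ∀ i, 0 < x t₀ i := key t₀ ⟨ht₀0, ht₀T⟩ ht₀mem.2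
    -- eventual positivity near t₀
    have hev : ∀ᶠ τ in nhds t₀, ∀ i, 0 < x τ i := by
      rw [Filter.eventually_all]
      intro i
      have := hx_cont i t₀ ⟨ht₀0, ht₀T⟩
      exact this (Ioi_mem_nhds (hpos i))
    obtain ⟨ε, hε, hball⟩ := Metric.eventually_nhds_iff.mp hev
    set t₁ := min (t₀ + ε / 2) T with ht₁
    have ht₀t₁ : t₀ < t₁ := lt_min (by linarith) ht₀lt
    have ht₁C : t₁ ∈ C := by
      refine ⟨⟨le_trans ht₀0 ht₀t₁.le, min_le_right _ _⟩, fun τ hτ j => ?_⟩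
      rcases le_or_gt τ t₀ with hle | hlt
      · exact ht₀mem.2 τ ⟨hτ.1, hle⟩ j
      · have : dist τ t₀ < ε := by
          rw [Real.dist_eq, abs_of_pos (by linarith)]
          have : τ ≤ t₀ + ε / 2 := le_trans hτ.2 (min_le_left _ _)
          linarith
        exact (hball this j).le
    have := le_csSup hCbdd ht₁C
    linarith
  intro t ht i
  exact ht₀mem.2 t ⟨ht.1, ht₀eq ▸ ht.2⟩ i
end

section
/- If points g(d₁),…,g(dᵣ) on a differentiable curve g : ℝ → ℝⁿ are the vertices of a proper face of the convex hull of the image of g, with d₁,…,d_p interior points of the parameter domain D, then the (n+1)×(r+p) matrix whose first r columns are (1, g(dᵢ)) and last p columns are (0, g′(dᵢ)) has rank at most n; i.e. all its (n+1)×(n+1) minors vanish, provided r + p ≥ n+1. -/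
open Matrix

/-- Vinzant's face-vertex matrix condition: if g(d₁),…,g(dᵣ) are points of a proper
(exposed) face of the convex hull of the curve g over D, with the first p parameters
interior to D, then the (n+1)×(r+p) matrix with columns (1, g(dᵢ)) and (0, g′(dᵢ))
has rank at most n, so all its (n+1)×(n+1) minors vanish. -/
theorem face_vertex_matrix_rank_le
    {n r p : ℕ} (D : Set ℝ) (hD : ∃ a b : ℝ, D = Set.Icc a b)
    (g g' : ℝ → Fin n → ℝ)
    (hg : ∀ t ∈ D, HasDerivAt g (g' t) t)
    (d : Fin r → ℝ) (hd : ∀ i, d i ∈ D)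
    (hpr : p ≤ r)
    (hint : ∀ i : Fin r, (i : ℕ) < p → d i ∈ interior D)
    (ℓ : (Fin n → ℝ) →ₗ[ℝ] ℝ) (c : ℝ) (hℓ : ℓ ≠ 0)
    (hsupp : ∀ x ∈ g '' D, ℓ x ≤ c)
    (hface : ∀ i : Fin r, ℓ (g (d i)) = c)
    (hdim : n + 1 ≤ r + p) :
    (Matrix.of (fun (a : Fin (n + 1)) (b : Fin (r + p)) =>
      if h : (b : ℕ) < r then (Fin.cons (1 : ℝ) (g (d ⟨b, h⟩)) : Fin (n + 1) → ℝ) a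
      else (Fin.cons (0 : ℝ) (g' (d ⟨(b : ℕ) - r,
        by omega⟩)) : Fin (n + 1) → ℝ) a)).rank ≤ n := by
  classical
  set M : Matrix (Fin (n + 1)) (Fin (r + p)) ℝ :=
    Matrix.of (fun (a : Fin (n + 1)) (b : Fin (r + p)) =>
      if h : (b : ℕ) < r then (Fin.cons (1 : ℝ) (g (d ⟨b, h⟩)) : Fin (n + 1) → ℝ) a
      else (Fin.cons (0 : ℝ) (g' (d ⟨(b : ℕ) - r,
        by omega⟩)) : Fin (n + 1) → ℝ) a) with hM
  -- Step 1: at interior parameters, ℓ (g' (d i)) = 0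
  have key : ∀ i : Fin r, (i : ℕ) < p → ℓ (g' (d i)) = 0 := by
    intro i hi
    have hdi : d i ∈ interior D := hint i hi
    have hmem : D ∈ nhds (d i) := mem_interior_iff_mem_nhds.mp hdi
    have hloc : IsLocalMax (fun t => ℓ (g t)) (d i) := by
      have hev : ∀ᶠ t in nhds (d i), ℓ (g t) ≤ c :=
        Filter.eventually_of_mem hmem (fun t ht => hsupp _ ⟨t, ht, rfl⟩)
      exact hev.mono (fun t ht => by simpa [hface i] using ht)
    have hda : HasDerivAt (fun t => ℓ (g t)) (ℓ (g' (d i))) (d i) := by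
      have := ((LinearMap.toContinuousLinearMap ℓ).hasFDerivAt).comp_hasDerivAt
        (d i) (hg _ (hd i))
      exact this
    exact hloc.hasDerivAt_eq_zero hda
  -- Coefficient vector of ℓ
  set w : Fin n → ℝ := fun j => ℓ (Pi.single j 1) with hw
  have hℓsum : ∀ x : Fin n → ℝ, ℓ x = ∑ j, x j * w j := by
    intro x
    rw [LinearMap.pi_apply_eq_sum_univ ℓ x]
    refine Finset.sum_congr rfl fun j _ => ?_
    rw [smul_eq_mul]
    congr 1
    congr 1
    funext k
    simp [Pi.single_apply, eq_comm]
  set u : Fin (n + 1) → ℝ := Fin.cons (-c) w with hu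
  have hune : u ≠ 0 := by
    intro h
    apply hℓ
    ext x
    have hw0 : ∀ j, w j = 0 := by
      intro j
      have := congrFun h j.succ
      simpa [hu] using this
    show w x = 0
    exact hw0 x
  -- u is in the kernel of Mᵀ.mulVecLin
  have hker : Mᵀ.mulVec u = 0 := by
    funext b
    simp only [Matrix.mulVec, dotProduct, Matrix.transpose_apply]
    by_cases hb : (b : ℕ) < r
    · have : ∀ a : Fin (n + 1),
          M a b = (Fin.cons (1 : ℝ) (g (d ⟨b, hb⟩)) : Fin (n + 1) → ℝ) a := by
        intro a; simp [hM, hb]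
      simp only [this]
      rw [Fin.sum_univ_succ]
      simp only [Fin.cons_zero, Fin.cons_succ, hu, Pi.zero_apply]
      rw [← hℓsum, hface]
      ring
    · have hb2 : (b : ℕ) - r < p := by omega
      have : ∀ a : Fin (n + 1),
          M a b = (Fin.cons (0 : ℝ) (g' (d ⟨(b : ℕ) - r, by omega⟩)) : Fin (n + 1) → ℝ) a := by
        intro a; simp [hM, hb]
      simp only [this]
      rw [Fin.sum_univ_succ]
      simp only [Fin.cons_zero, Fin.cons_succ, hu, Pi.zero_apply]
      rw [← hℓsum, key _ hb2]
      ring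
  -- conclude via rank-nullity on Mᵀ
  have hrT : Mᵀ.rank ≤ n := by
    have hrn := LinearMap.finrank_range_add_finrank_ker Mᵀ.mulVecLin
    have hker1 : 0 < Module.finrank ℝ (LinearMap.ker Mᵀ.mulVecLin) := by
      have humem : u ∈ LinearMap.ker Mᵀ.mulVecLin := by
        rw [LinearMap.mem_ker, Matrix.mulVecLin_apply]
        exact hker
      exact Module.finrank_pos_iff_exists_ne_zero.mpr
        ⟨⟨u, humem⟩, by simpa [Submodule.mk_eq_zero] using hune⟩
    have hfr : Module.finrank ℝ (Fin (n + 1) → ℝ) = n + 1 := by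
      simp [Module.finrank_pi]
    rw [hfr] at hrn
    have : Mᵀ.rank = Module.finrank ℝ (LinearMap.range Mᵀ.mulVecLin) := rfl
    omega
  calc M.rank = Mᵀ.rank := (Matrix.rank_transpose M).symm
    _ ≤ n := hrT
end
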